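/- arXiv:2505.24648 — 3 statements merged into one kernel-verified Lean document; each statement's English description precedes it below -/
import Mathlib

section
/- Let m ≥ 1 and let A = (a_{i,k}) be an m×m matrix with integer entries. Suppose that for each k ∈ {1,…,m} there is a subset D_k ⊆ {1,…,k−1} such that a_{i,k} = Σ_{j∈D_k} a_{i,j} for every i with 1 ≤ i < k, and a_{k,k} = Σ_{j∈D_k} a_{k,j} + 1. Then for every t ∈ {1,…,m}, the leading principal t×t submatrix A_t of A has determinant equal to 1; in particular det A = 1. -/
/-- If an `m × m` integer matrix `A` satisfies the recursion
`a_{i,k} = ∑_{j ∈ D_k} a_{i,j}` for `i < k` and `a_{k,k} = ∑_{j ∈ D_k} a_{k,j} + 1`,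
where `D_k` consists of indices `< k`, then every leading principal `t × t`
submatrix of `A` has determinant `1`; in particular `det A = 1`. -/
theorem valuation_matrix_principal_minors_unimodular
    (m : ℕ) (hm : 1 ≤ m) (A : Matrix (Fin m) (Fin m) ℤ)
    (D : Fin m → Finset (Fin m))
    (hD : ∀ k : Fin m, ∀ j ∈ D k, j < k)
    (hrec₁ : ∀ k i : Fin m, i < k → A i k = ∑ j ∈ D k, A i j)
    (hrec₂ : ∀ k : Fin m, A k k = (∑ j ∈ D k, A k j) + 1) :
    (∀ t : ℕ, 1 ≤ t → ∀ ht : t ≤ m,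
      (A.submatrix (Fin.castLE ht) (Fin.castLE ht)).det = 1) ∧ A.det = 1 := by
  have key : ∀ t : ℕ, ∀ ht : t ≤ m,
      (A.submatrix (Fin.castLE ht) (Fin.castLE ht)).det = 1 := by
    intro t
    induction t with
    | zero => intro ht; simp [Matrix.det_isEmpty]
    | succ n ih =>
      intro ht1
      have ht : n ≤ m := le_trans (Nat.le_succ n) ht1
      set k' : Fin m := Fin.castLE ht1 (Fin.last n) with hk'
      have hk'val : (k' : ℕ) = n := rfl
      set B : Matrix (Fin (n+1)) (Fin (n+1)) ℤ :=
        (A.submatrix (Fin.castLE ht1) (Fin.castLE ht1)).transpose with hB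
      set C : Matrix (Fin (n+1)) (Fin (n+1)) ℤ :=
        B.updateRow (Fin.last n) (Pi.single (Fin.last n) 1) with hC
      set S : Finset (Fin (n+1)) :=
        Finset.univ.filter (fun j : Fin (n+1) => Fin.castLE ht1 j ∈ D k') with hS
      have hmemD : ∀ j ∈ D k', (j : ℕ) < n := by
        intro j hj
        have h3 := hD k' j hj
        rw [Fin.lt_def] at h3
        exact h3
      have hSlt : ∀ j ∈ S, (j : ℕ) < n := by
        intro j hj
        simp only [hS, Finset.mem_filter] at hj
        exact hmemD _ hj.2
      have hSne : ∀ j ∈ S, j ≠ Fin.last n := by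
        intro j hj h
        have := hSlt j hj
        simp [h] at this
      have hlastS : Fin.last n ∉ S := fun h => hSne _ h rfl
      -- sum over D k' equals sum over S
      have hsum : ∀ i : Fin m, ∑ j ∈ D k', A i j = ∑ j ∈ S, A i (Fin.castLE ht1 j) := by
        intro i
        refine Finset.sum_bij'
          (fun j _ => (⟨(j : ℕ) % (n+1), Nat.mod_lt _ n.succ_pos⟩ : Fin (n+1)))
          (fun j _ => Fin.castLE ht1 j) ?_ ?_ ?_ ?_ ?_
        · intro a ha
          have hv : (a : ℕ) % (n+1) = (a : ℕ) :=
            Nat.mod_eq_of_lt (by have := hmemD a ha; omega)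
          simp only [hS, Finset.mem_filter, Finset.mem_univ, true_and]
          have hc : Fin.castLE ht1 (⟨(a : ℕ) % (n+1), Nat.mod_lt _ n.succ_pos⟩ : Fin (n+1)) = a :=
            Fin.ext (by simpa using hv)
          rw [hc]; exact ha
        · intro a ha
          simp only [hS, Finset.mem_filter] at ha
          exact ha.2
        · intro a ha
          have hv : (a : ℕ) % (n+1) = (a : ℕ) :=
            Nat.mod_eq_of_lt (by have := hmemD a ha; omega)
          exact Fin.ext (by simpa using hv)
        · intro a ha
          exact Fin.ext (by simpa using Nat.mod_eq_of_lt a.isLt)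
        · intro a ha
          have hv : (a : ℕ) % (n+1) = (a : ℕ) :=
            Nat.mod_eq_of_lt (by have := hmemD a ha; omega)
          congr 1
          exact (Fin.ext (by simpa using hv)).symm
      have hBval : ∀ r c : Fin (n+1), B r c = A (Fin.castLE ht1 c) (Fin.castLE ht1 r) :=
        fun r c => rfl
      -- the last row of B
      have hrow : ∀ c : Fin (n+1),
          B (Fin.last n) c = (Pi.single (Fin.last n) (1:ℤ) : Fin (n+1) → ℤ) c + ∑ j ∈ S, B j c := by
        intro c
        rcases eq_or_ne c (Fin.last n) with hc | hc
        · subst hc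
          rw [hBval]
          have hkk : Fin.castLE ht1 (Fin.last n) = k' := rfl
          rw [hkk, hrec₂ k', hsum]
          rw [Pi.single_eq_same, add_comm]
          congr 1
        · rw [hBval]
          have hlt : Fin.castLE ht1 c < k' := by
            rw [Fin.lt_def]
            have h1 : (c : ℕ) ≠ n := fun h => hc (Fin.ext (by simpa using h))
            have h2 := c.isLt
            simpa using by omega
          rw [hrec₁ k' _ hlt, hsum, Pi.single_eq_of_ne hc, zero_add]
          exact Finset.sum_congr rfl fun j _ => (hBval j c).symm
      -- B as an update of C
      have hBC : B = C.updateRow (Fin.last n)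
          ((1:ℤ) • C (Fin.last n) + ∑ j ∈ S, (1:ℤ) • C j) := by
        ext r c
        rcases eq_or_ne r (Fin.last n) with hr | hr
        · subst hr
          rw [Matrix.updateRow_self]
          simp only [one_smul, Pi.add_apply, Finset.sum_apply]
          rw [hrow c]
          have h1 : C (Fin.last n) c = (Pi.single (Fin.last n) (1:ℤ) : Fin (n+1) → ℤ) c := by
            rw [hC, Matrix.updateRow_self]
          rw [h1]
          congr 1
          rw [show (∑ x ∈ S, C x) c = ∑ x ∈ S, C x c from Finset.sum_apply c S fun x => C x]
          refine Finset.sum_congr rfl fun j hj => ?_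
          rw [hC, Matrix.updateRow_ne (hSne j hj)]
        · rw [Matrix.updateRow_ne hr, hC, Matrix.updateRow_ne hr]
      have hdetBC : B.det = C.det := by
        rw [hBC, Matrix.det_updateRow_sum_aux C S hlastS (fun _ => (1:ℤ)) 1]
        simp
      -- det C equals the n × n minor determinant
      have hminor : C.det = (A.submatrix (Fin.castLE ht) (Fin.castLE ht)).transpose.det := by
        rw [Matrix.det_succ_row C (Fin.last n)]
        rw [Finset.sum_eq_single (Fin.last n)]
        · have hCs : C.submatrix (Fin.last n).succAbove (Fin.last n).succAbove
              = (A.submatrix (Fin.castLE ht) (Fin.castLE ht)).transpose := by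
            ext i j
            rw [Fin.succAbove_last]
            have hne : Fin.castSucc i ≠ Fin.last n := (Fin.castSucc_lt_last i).ne
            simp only [Matrix.submatrix_apply]
            rw [hC, Matrix.updateRow_ne hne]
            rfl
          rw [hCs]
          have hCl : C (Fin.last n) (Fin.last n) = 1 := by
            rw [hC, Matrix.updateRow_self, Pi.single_eq_same]
          rw [hCl]
          have hpow : (-1 : ℤ) ^ ((Fin.last n : ℕ) + (Fin.last n : ℕ)) = 1 :=
            Even.neg_one_pow ⟨n, rfl⟩
          rw [hpow]; ring
        · intro b _ hb
          have h0 : C (Fin.last n) b = 0 := by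
            rw [hC, Matrix.updateRow_self, Pi.single_eq_of_ne hb]
          rw [h0]; ring
        · simp
      have hfin : B.det = 1 := by rw [hdetBC, hminor, Matrix.det_transpose]; exact ih ht
      rw [hB, Matrix.det_transpose] at hfin
      exact hfin
  refine ⟨fun t _ ht => key t ht, ?_⟩
  have h := key m le_rfl
  have heq : A.submatrix (Fin.castLE (le_refl m)) (Fin.castLE (le_refl m)) = A := by
    ext i j; rfl
  rwa [heq] at h
end

section
/- Let s, k be integers with 1 ≤ k < s. Let A = (a_{i,j}) be an s×s integer matrix, B = (b_{i,j}) a k×s integer matrix, and ℓ_{s−k},…,ℓ_{s−1} integers. Assume: (i) a_{i,s} = Σ_{j=s−k}^{s−1} a_{i,j} for every i with 1 ≤ i ≤ s−1; (ii) b_{i,s} = Σ_{j=s−k}^{s−1} b_{i,j} + ℓ_{s−k+i−1} for every i with 1 ≤ i ≤ k; (iii) the leading principal (s−1)×(s−1) submatrix A_{s−1} of A has determinant 1. Then for all integers N_1,…,N_{s−k−1} and all integers r'_{s−k},…,r'_{s−1}, there exist integers r_1,…,r_{s−1} such that: Σ_{i=1}^{s−1} r_i a_{i,j} − Σ_{i=1}^{k}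 r'_{s−k+i−1} b_{i,j} = N_j for 1 ≤ j ≤ s−k−1; Σ_{i=1}^{s−1} r_i a_{i,j} − Σ_{i=1}^{k} r'_{s−k+i−1} b_{i,j} = r'_j ℓ_j for s−k ≤ j ≤ s−1; and Σ_{i=1}^{s−1} r_i a_{i,s} − Σ_{i=1}^{k} r'_{s−k+i−1} b_{i,s} = 0. -/
lemma sum_Icc_one_eq_fin (n : ℕ) (f : ℕ → ℤ) :
    ∑ i ∈ Finset.Icc 1 n, f i = ∑ i : Fin n, f (i.val + 1) := by
  rw [Fin.sum_univ_eq_sum_range (fun i => f (i + 1)) n,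
    show Finset.Icc 1 n = Finset.Ico 1 (n + 1) by rw [Finset.Ico_add_one_right_eq_Icc],
    Finset.sum_Ico_eq_sum_range]
  simp [Nat.add_comm]

lemma exists_vecMul_eq {n : ℕ} (M : Matrix (Fin n) (Fin n) ℤ)
    (hM : IsUnit M.det) (c : Fin n → ℤ) :
    ∃ x : Fin n → ℤ, Matrix.vecMul x M = c := by
  refine ⟨Matrix.vecMul c M⁻¹, ?_⟩
  rw [Matrix.vecMul_vecMul, Matrix.nonsing_inv_mul M hM, Matrix.vecMul_one]

/-- With `1 ≤ k < s`, matrices `a` (`s × s`, integer entries,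
indexed by `1,…,s`), `b` (`k × s`) and integers `ℓ_{s-k},…,ℓ_{s-1}` satisfying
(i) `a_{i,s} = ∑_{j=s-k}^{s-1} a_{i,j}` for `1 ≤ i ≤ s-1`,
(ii) `b_{i,s} = ∑_{j=s-k}^{s-1} b_{i,j} + ℓ_{s-k+i-1}` for `1 ≤ i ≤ k`,
(iii) the leading principal `(s-1) × (s-1)` submatrix of `a` has determinant `1`;
then for all integers `N_1,…,N_{s-k-1}` and `r'_{s-k},…,r'_{s-1}` there exist
integers `r_1,…,r_{s-1}` solving the full linear system, including the last
equation `∑ r_i a_{i,s} − ∑ r'_{s-k+i-1} b_{i,s} = 0`. -/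
theorem solvability_of_dicritical_system
    (s k : ℕ) (hk : 1 ≤ k) (hks : k < s)
    (a b : ℕ → ℕ → ℤ) (ℓ : ℕ → ℤ)
    (ha : ∀ i, 1 ≤ i → i ≤ s - 1 →
      a i s = ∑ j ∈ Finset.Icc (s - k) (s - 1), a i j)
    (hb : ∀ i, 1 ≤ i → i ≤ k →
      b i s = (∑ j ∈ Finset.Icc (s - k) (s - 1), b i j) + ℓ (s - k + i - 1))
    (hdet : (Matrix.of fun i j : Fin (s - 1) =>
      a (i.val + 1) (j.val + 1)).det = 1) :
    ∀ N r' : ℕ → ℤ, ∃ r : ℕ → ℤ,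
      (∀ j, 1 ≤ j → j ≤ s - k - 1 →
        (∑ i ∈ Finset.Icc 1 (s - 1), r i * a i j)
          - (∑ i ∈ Finset.Icc 1 k, r' (s - k + i - 1) * b i j) = N j) ∧
      (∀ j, s - k ≤ j → j ≤ s - 1 →
        (∑ i ∈ Finset.Icc 1 (s - 1), r i * a i j)
          - (∑ i ∈ Finset.Icc 1 k, r' (s - k + i - 1) * b i j) = r' j * ℓ j) ∧
      ((∑ i ∈ Finset.Icc 1 (s - 1), r i * a i s)
        - (∑ i ∈ Finset.Icc 1 k, r' (s - k + i - 1) * b i s) = 0) := by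
  intro N r'
  have hs2 : 2 ≤ s := by omega
  set M : Matrix (Fin (s - 1)) (Fin (s - 1)) ℤ :=
    Matrix.of fun i j : Fin (s - 1) => a (i.val + 1) (j.val + 1) with hMdef
  have hM : IsUnit M.det := by rw [hdet]; exact isUnit_one
  set c : Fin (s - 1) → ℤ := fun j =>
    (if j.val + 1 ≤ s - k - 1 then N (j.val + 1)
      else r' (j.val + 1) * ℓ (j.val + 1))
    + ∑ i ∈ Finset.Icc 1 k, r' (s - k + i - 1) * b i (j.val + 1) with hcdef
  obtain ⟨x, hx⟩ := exists_vecMul_eq M hM c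
  set r : ℕ → ℤ := fun i => if h : i ∈ Finset.Icc 1 (s - 1) then
      x ⟨i - 1, by simp only [Finset.mem_Icc] at h; omega⟩ else 0 with hrdef
  have hr : ∀ i : Fin (s - 1), r (i.val + 1) = x i := by
    intro i
    have hmem : i.val + 1 ∈ Finset.Icc 1 (s - 1) := by
      simp only [Finset.mem_Icc]; omega
    simp only [hrdef, dif_pos hmem]
    exact congrArg x (Fin.ext (by simp))
  have key : ∀ j' : Fin (s - 1),
      ∑ i ∈ Finset.Icc 1 (s - 1), r i * a i (j'.val + 1) = c j' := by
    intro j'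
    rw [sum_Icc_one_eq_fin]
    have : ∀ i : Fin (s - 1),
        r (i.val + 1) * a (i.val + 1) (j'.val + 1) = x i * M i j' := by
      intro i; rw [hr i]; rfl
    rw [Finset.sum_congr rfl fun i _ => this i, ← hx]
    simp [Matrix.vecMul, dotProduct]
  have h2 : ∀ j, s - k ≤ j → j ≤ s - 1 →
      (∑ i ∈ Finset.Icc 1 (s - 1), r i * a i j)
        - (∑ i ∈ Finset.Icc 1 k, r' (s - k + i - 1) * b i j) = r' j * ℓ j := by
    intro j hj1 hj2
    have hjlt : j - 1 < s - 1 := by omega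
    have h := key ⟨j - 1, hjlt⟩
    have hj : j - 1 + 1 = j := by omega
    simp only [hcdef, hj] at h
    rw [h, if_neg (by omega)]; ring
  refine ⟨r, ?_, h2, ?_⟩
  · intro j hj1 hj2
    have hjlt : j - 1 < s - 1 := by omega
    have h := key ⟨j - 1, hjlt⟩
    have hj : j - 1 + 1 = j := by omega
    simp only [hcdef, hj] at h
    rw [h, if_pos (by omega)]; ring
  · have e1 : ∑ i ∈ Finset.Icc 1 (s - 1), r i * a i s
        = ∑ j ∈ Finset.Icc (s - k) (s - 1),
            ∑ i ∈ Finset.Icc 1 (s - 1), r i * a i j := by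
      rw [Finset.sum_comm]
      refine Finset.sum_congr rfl fun i hi => ?_
      simp only [Finset.mem_Icc] at hi
      rw [ha i hi.1 hi.2, Finset.mul_sum]
    have e2 : ∑ i ∈ Finset.Icc 1 k, r' (s - k + i - 1) * b i s
        = (∑ j ∈ Finset.Icc (s - k) (s - 1),
            ∑ i ∈ Finset.Icc 1 k, r' (s - k + i - 1) * b i j)
          + ∑ i ∈ Finset.Icc 1 k, r' (s - k + i - 1) * ℓ (s - k + i - 1) := by
      rw [Finset.sum_comm, ← Finset.sum_add_distrib]
      refine Finset.sum_congr rfl fun i hi => ?_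
      simp only [Finset.mem_Icc] at hi
      rw [hb i hi.1 hi.2, mul_add, Finset.mul_sum]
    have hre : ∑ j ∈ Finset.Icc (s - k) (s - 1), r' j * ℓ j
        = ∑ i ∈ Finset.Icc 1 k, r' (s - k + i - 1) * ℓ (s - k + i - 1) := by
      refine Finset.sum_nbij' (fun j => j - (s - k) + 1)
        (fun i => s - k + i - 1) ?_ ?_ ?_ ?_ ?_ <;>
        intro t ht <;> simp only [Finset.mem_Icc] at ht ⊢
      · omega
      · omega
      · omega
      · omega
      · have : s - k + (t - (s - k) + 1) - 1 = t := by omega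
        rw [this]
    rw [e1, e2]
    have : ∑ j ∈ Finset.Icc (s - k) (s - 1),
        ((∑ i ∈ Finset.Icc 1 (s - 1), r i * a i j)
          - ∑ i ∈ Finset.Icc 1 k, r' (s - k + i - 1) * b i j)
        = ∑ j ∈ Finset.Icc (s - k) (s - 1), r' j * ℓ j := by
      refine Finset.sum_congr rfl fun j hj => ?_
      simp only [Finset.mem_Icc] at hj
      exact h2 j hj.1 hj.2
    rw [Finset.sum_sub_distrib] at this
    rw [hre] at this
    linarith [this]
end

section
/- Let s < m be natural numbers and let a be a positive rational number. For each i ∈ {s+1,…,m} suppose given a nonempty set A_i ⊆ {s,…,i−1}, a nonempty finite set Z_i ⊆ {i,…,m}, and positive rational numbers μ_{i,j} for j ∈ Z_i. Define recursively the sets Z̃_i := Z_i ∪ ⋃_{a∈A_i, a>s} Z̃_a for i = s+1,…,m. Let α_s : ℚ^{m−s} → ℚ be any function of the variables k = (k_{s+1},…,k_m), and define recursively α_i(k) = Σ_{a∈A_i} α_a(k) + Σ_{j∈Z_i} μ_{i,j} k_j for i = s+1,…,m. Then for each i ∈ {s+1,…,m} there exist a positive integer p_i and rational numbers w_{i,j}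 for j ∈ {s+1,…,m}, with w_{i,j} > 0 for every j ∈ Z̃_i and w_{i,j} = 0 for every j ∉ Z̃_i, such that α_i(k) = p_i · ( α_s(k) + a · Σ_{j=s+1}^{m} w_{i,j} k_j ) for all k ∈ ℚ^{m−s}. -/
/-- the structural identity `α_i = p_i (α_s + a ⬝ W_i)` of Steps 6–7
in the proof of Theorem 4.4.  Here, for `i ∈ {s+1,…,m}`, `A i ⊆ {s,…,i-1}` and
`Z i ⊆ {i,…,m}` are nonempty, `μ i j > 0` for `j ∈ Z i`, the sets `Zt i`
satisfy the recursion `Zt i = Z i ∪ ⋃_{b ∈ A i, b > s} Zt b`, and the functions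
`α i` satisfy the recursion `α i k = ∑_{b ∈ A i} α b k + ∑_{j ∈ Z i} μ i j * k j`
(with `α s` an arbitrary given function).  The conclusion produces a positive
integer `p_i` and rationals `w_{i,j}`, positive exactly on `Zt i` (and zero on
the other indices of `{s+1,…,m}`), with
`α i k = p_i (α s k + a * ∑_{j=s+1}^m w_{i,j} k_j)` for all `k`. -/
theorem alpha_structural_identity
    (s m : ℕ) (hsm : s < m) (a : ℚ) (ha : 0 < a)
    (A Z Zt : ℕ → Finset ℕ) (μ : ℕ → ℕ → ℚ)
    (α : ℕ → (ℕ → ℚ) → ℚ)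
    (hA : ∀ i, s + 1 ≤ i → i ≤ m →
      (A i).Nonempty ∧ ∀ b ∈ A i, s ≤ b ∧ b ≤ i - 1)
    (hZ : ∀ i, s + 1 ≤ i → i ≤ m →
      (Z i).Nonempty ∧ ∀ j ∈ Z i, i ≤ j ∧ j ≤ m)
    (hμ : ∀ i, s + 1 ≤ i → i ≤ m → ∀ j ∈ Z i, 0 < μ i j)
    (hZt : ∀ i, s + 1 ≤ i → i ≤ m →
      Zt i = Z i ∪ ((A i).filter (fun b => s < b)).biUnion Zt)
    (hα : ∀ i, s + 1 ≤ i → i ≤ m → ∀ k : ℕ → ℚ,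
      α i k = (∑ b ∈ A i, α b k) + ∑ j ∈ Z i, μ i j * k j) :
    ∀ i, s + 1 ≤ i → i ≤ m →
      ∃ (p : ℕ) (w : ℕ → ℚ), 0 < p ∧
        (∀ j ∈ Zt i, 0 < w j) ∧
        (∀ j, s + 1 ≤ j → j ≤ m → j ∉ Zt i → w j = 0) ∧
        (∀ k : ℕ → ℚ,
          α i k = (p : ℚ) * (α s k + a * ∑ j ∈ Finset.Icc (s + 1) m, w j * k j)) := by
  intro i
  induction i using Nat.strong_induction_on with
  | _ i IH =>
    intro hi1 hi2
    choose! p w hp hw1 hw2 hwα using IH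
    obtain ⟨hAne, hAmem⟩ := hA i hi1 hi2
    obtain ⟨hZne, hZmem⟩ := hZ i hi1 hi2
    -- effective multiplicity and weight of each b ∈ A i
    set pb : ℕ → ℕ := fun b => if s < b then p b else 1 with hpbdef
    set w' : ℕ → ℕ → ℚ := fun b j => if s < b then w b j else 0 with hw'def
    have hbrange : ∀ b ∈ A i, s < b → (b < i ∧ s + 1 ≤ b ∧ b ≤ m) := by
      intro b hb hbs
      obtain ⟨h1, h2⟩ := hAmem b hb
      omega
    have hpbpos : ∀ b ∈ A i, 0 < pb b := by
      intro b hb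
      by_cases h : s < b
      · obtain ⟨c1, c2, c3⟩ := hbrange b hb h
        simpa [pb, h] using hp b c1 c2 c3
      · simp [pb, h]
    set P : ℕ := ∑ b ∈ A i, pb b with hPdef
    have hPpos : 0 < P := Finset.sum_pos hpbpos hAne
    have hPne : (P : ℚ) ≠ 0 := by positivity
    have hane : a ≠ 0 := ne_of_gt ha
    set W : ℕ → ℚ := fun j =>
      ((∑ b ∈ A i, (pb b : ℚ) * w' b j) + (if j ∈ Z i then μ i j / a else 0)) / P
      with hWdef
    have hw'nn : ∀ b ∈ A i, ∀ j, s + 1 ≤ j → j ≤ m → 0 ≤ w' b j := by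
      intro b hb j hj1 hj2
      by_cases h : s < b
      · obtain ⟨c1, c2, c3⟩ := hbrange b hb h
        by_cases hjZ : j ∈ Zt b
        · simpa [w', h] using le_of_lt (hw1 b c1 c2 c3 j hjZ)
        · simp [w', h, hw2 b c1 c2 c3 j hj1 hj2 hjZ]
      · simp [w', h]
    have hZsub : Z i ⊆ Finset.Icc (s + 1) m := by
      intro j hj
      have := hZmem j hj
      simp only [Finset.mem_Icc]
      omega
    -- Zt i ⊆ Icc (s+1) m
    have hZtsub : ∀ n, ∀ b, b ≤ n → s + 1 ≤ b → b ≤ m → Zt b ⊆ Finset.Icc (s + 1) m := by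
      intro n
      induction n with
      | zero => intro b hb h1 h2; omega
      | succ n ih =>
        intro b hb h1 h2
        rw [hZt b h1 h2]
        intro j hj
        simp only [Finset.mem_union, Finset.mem_biUnion, Finset.mem_filter] at hj
        rcases hj with hj | ⟨c, ⟨hcA, hcs⟩, hjc⟩
        · have := (hZ b h1 h2).2 j hj
          simp only [Finset.mem_Icc]; omega
        · have hc := (hA b h1 h2).2 c hcA
          exact ih c (by omega) (by omega) (by omega) hjc
    refine ⟨P, W, hPpos, ?_, ?_, ?_⟩
    · -- positivity on Zt i
      intro j hj
      have hjIcc : j ∈ Finset.Icc (s + 1) m := hZtsub i i le_rfl hi1 hi2 hj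
      simp only [Finset.mem_Icc] at hjIcc
      have hnum : 0 < (∑ b ∈ A i, (pb b : ℚ) * w' b j) + (if j ∈ Z i then μ i j / a else 0) := by
        have hsnn : 0 ≤ ∑ b ∈ A i, (pb b : ℚ) * w' b j :=
          Finset.sum_nonneg fun b hb =>
            mul_nonneg (by positivity) (hw'nn b hb j hjIcc.1 hjIcc.2)
        rw [hZt i hi1 hi2] at hj
        simp only [Finset.mem_union, Finset.mem_biUnion, Finset.mem_filter] at hj
        rcases hj with hj | ⟨b, ⟨hbA, hbs⟩, hjb⟩
        · have : 0 < μ i j / a := div_pos (hμ i hi1 hi2 j hj) ha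
          rw [if_pos hj]; linarith
        · have hiter : 0 ≤ if j ∈ Z i then μ i j / a else 0 := by
            split
            · exact le_of_lt (div_pos (hμ i hi1 hi2 j ‹_›) ha)
            · exact le_refl 0
          obtain ⟨c1, c2, c3⟩ := hbrange b hbA hbs
          have hterm : 0 < (pb b : ℚ) * w' b j := by
            have := hw1 b c1 c2 c3 j hjb
            have hpbb := hpbpos b hbA
            have : 0 < w' b j := by simpa [w', hbs] using this
            positivity
          have : 0 < ∑ b ∈ A i, (pb b : ℚ) * w' b j :=
            Finset.sum_pos' (fun b hb =>
              mul_nonneg (by positivity) (hw'nn b hb j hjIcc.1 hjIcc.2)) ⟨b, hbA, hterm⟩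
          linarith
      exact div_pos hnum (by positivity)
    · -- vanishing off Zt i
      intro j hj1 hj2 hj
      rw [hZt i hi1 hi2] at hj
      simp only [Finset.mem_union, Finset.mem_biUnion, Finset.mem_filter, not_or, not_exists,
        not_and] at hj
      obtain ⟨hjZ, hjb⟩ := hj
      have : ∀ b ∈ A i, (pb b : ℚ) * w' b j = 0 := by
        intro b hb
        by_cases h : s < b
        · obtain ⟨c1, c2, c3⟩ := hbrange b hb h
          have := hw2 b c1 c2 c3 j hj1 hj2 (hjb b ⟨hb, h⟩)
          simp [w', h, this]
        · simp [w', h]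
      simp [W, Finset.sum_eq_zero this, hjZ]
    · -- the identity
      intro k
      have hαb : ∀ b ∈ A i, α b k =
          (pb b : ℚ) * (α s k + a * ∑ j ∈ Finset.Icc (s + 1) m, w' b j * k j) := by
        intro b hb
        by_cases h : s < b
        · obtain ⟨c1, c2, c3⟩ := hbrange b hb h
          have := hwα b c1 c2 c3 k
          simp only [w', h, if_true, pb]
          simpa [h] using this
        · have hbs : b = s := by have := hAmem b hb; omega
          subst hbs
          simp [pb, w', h]
      have hμsum : ∑ j ∈ Z i, μ i j * k j =
          ∑ j ∈ Finset.Icc (s + 1) m, (if j ∈ Z i then μ i j else 0) * k j := by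
        rw [← Finset.sum_subset hZsub (fun x _ hx => by simp [hx])]
        exact Finset.sum_congr rfl fun j hj => by simp [hj]
      have hPW : ∀ j, (P : ℚ) * (a * (W j * k j)) =
          (∑ b ∈ A i, (pb b : ℚ) * (a * (w' b j * k j))) + (if j ∈ Z i then μ i j else 0) * k j := by
        intro j
        have hPWj : (P : ℚ) * W j =
            (∑ b ∈ A i, (pb b : ℚ) * w' b j) + (if j ∈ Z i then μ i j / a else 0) := by
          simp only [W]; field_simp
        calc (P : ℚ) * (a * (W j * k j)) = a * ((P : ℚ) * W j) * k j := by ring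
          _ = _ := by
              rw [hPWj, mul_add, add_mul, Finset.mul_sum, Finset.sum_mul]
              congr 1
              · exact Finset.sum_congr rfl fun b _ => by ring
              · split
                · field_simp
                · simp
      rw [hα i hi1 hi2 k, Finset.sum_congr rfl hαb, hμsum]
      rw [mul_add, Finset.mul_sum, Finset.mul_sum]
      rw [Finset.sum_congr rfl (fun j _ => hPW j)]
      rw [Finset.sum_add_distrib, Finset.sum_comm]
      simp only [mul_add, Finset.sum_add_distrib, ← Finset.sum_mul, ← Finset.mul_sum]
      push_cast [hPdef]
      rw [Finset.sum_mul]
      ring_nf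
      simp only [mul_comm (α s k), mul_comm a]
      ring
end
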